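/- Let ω be any exponentiation invariant generalized limit on L∞(0,∞) and define x(t) = (e/(e−1))·Σ_{k≥0}(e^k/log t)·χ_{[e^{e^k}, e^{e^{k+1}})}(t). Then ω(x) = 1. -/

import Mathlib

open Real Filter MeasureTheory

noncomputable section

/-- A function on `(0,∞)` (modelled on all of `ℝ`) is (essentially) bounded. -/
def Bdd (f : ℝ → ℝ) : Prop := ∃ C, ∀ t, |f t| ≤ C

/-- A generalized limit: a positive, normalized linear functional on `L∞(0,∞)`
(modelled as bounded functions `ℝ → ℝ`) which extends the limit at infinity. -/
structure GenLimit where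
  ω : (ℝ → ℝ) → ℝ
  add : ∀ f g, Bdd f → Bdd g → ω (f + g) = ω f + ω g
  smul : ∀ (c : ℝ) f, Bdd f → ω (c • f) = c * ω f
  pos : ∀ f, Bdd f → (∀ t, 0 ≤ f t) → 0 ≤ ω f
  lim : ∀ f (c : ℝ), Bdd f → Tendsto f atTop (nhds c) → ω f = c

/-- Exponentiation invariance: `ω(x ∘ (t ↦ t^a)) = ω(x)` for all `a > 0`. -/
def GenLimit.ExpInvariant (γ : GenLimit) : Prop :=
  ∀ f, Bdd f → ∀ a > (0:ℝ), γ.ω (fun t => f (t ^ a)) = γ.ω f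

/-- Dilation invariance: `ω(x ∘ (t ↦ βt)) = ω(x)` for all `β > 0`. -/
def GenLimit.DilInvariant (γ : GenLimit) : Prop :=
  ∀ f, Bdd f → ∀ β > (0:ℝ), γ.ω (fun t => f (β * t)) = γ.ω f

/-- Translation invariance: `ω(x(·+l)) = ω(x)` for all `l > 0`. -/
def GenLimit.TransInvariant (γ : GenLimit) : Prop :=
  ∀ f, Bdd f → ∀ l > (0:ℝ), γ.ω (fun t => f (t + l)) = γ.ω f

/-- The function `x(t) = (e/(e-1)) Σ_{k≥0} (e^k / log t) χ_{[e^{e^k}, e^{e^{k+1}})}(t)`. -/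
def x : ℝ → ℝ := fun t =>
  (Real.exp 1 / (Real.exp 1 - 1)) *
    ∑' k : ℕ, Set.indicator (Set.Ico (Real.exp (Real.exp k)) (Real.exp (Real.exp (k + 1))))
      (fun _ => Real.exp k / Real.log t) t

noncomputable def cK : ℝ := Real.exp 1 / (Real.exp 1 - 1)

lemma cK_pos : 0 < cK := by
  unfold cK
  have h := Real.exp_one_gt_d9
  have : (0:ℝ) < Real.exp 1 - 1 := by linarith
  positivity

lemma x_zero {t : ℝ} (ht : t < Real.exp 1) : x t = 0 := by
  unfold x
  have : ∀ k : ℕ, Set.indicator (Set.Ico (Real.exp (Real.exp k)) (Real.exp (Real.exp (k + 1))))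
      (fun _ => Real.exp k / Real.log t) t = 0 := by
    intro k
    apply Set.indicator_of_notMem
    intro hmem
    have h1 : Real.exp (Real.exp 0) ≤ Real.exp (Real.exp k) := by
      apply Real.exp_le_exp.2
      apply Real.exp_le_exp.2
      exact_mod_cast Nat.cast_nonneg k
    have := hmem.1
    simp only [Real.exp_zero] at h1
    linarith
  simp [this]

lemma x_eval {s : ℝ} (hs : 0 ≤ s) : x (Real.exp (Real.exp s)) = cK * Real.exp (↑⌊s⌋ - s) := by
  unfold x cK
  have hlog : Real.log (Real.exp (Real.exp s)) = Real.exp s := Real.log_exp _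
  have hfl : (0:ℤ) ≤ ⌊s⌋ := Int.floor_nonneg.2 hs
  set k₀ : ℕ := ⌊s⌋.toNat with hk₀
  have hk₀c : (k₀ : ℝ) = (⌊s⌋ : ℝ) := by
    rw [hk₀]; exact_mod_cast congrArg Int.cast (Int.toNat_of_nonneg hfl)
  have hmem : ∀ k : ℕ, Real.exp (Real.exp s) ∈
      Set.Ico (Real.exp (Real.exp (k:ℝ))) (Real.exp (Real.exp ((k:ℝ) + 1))) ↔ k = k₀ := by
    intro k
    constructor
    · rintro ⟨h1, h2⟩
      have h1' : (k:ℝ) ≤ s := by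
        have := Real.exp_le_exp.1 (Real.exp_le_exp.1 h1); linarith
      have h2' : s < (k:ℝ) + 1 := by
        have := Real.exp_lt_exp.1 (Real.exp_lt_exp.1 h2); linarith
      have : ⌊s⌋ = (k:ℤ) := by
        rw [Int.floor_eq_iff]
        constructor
        · exact_mod_cast h1'
        · exact_mod_cast h2'
      omega
    · rintro rfl
      constructor
      · apply Real.exp_le_exp.2; apply Real.exp_le_exp.2
        rw [hk₀c]; exact Int.floor_le s
      · apply Real.exp_lt_exp.2; apply Real.exp_lt_exp.2
        rw [hk₀c]; exact_mod_cast Int.lt_floor_add_one s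
  have htsum : ∑' k : ℕ, Set.indicator (Set.Ico (Real.exp (Real.exp (k:ℝ))) (Real.exp (Real.exp ((k:ℝ) + 1))))
      (fun _ => Real.exp (k:ℝ) / Real.log (Real.exp (Real.exp s))) (Real.exp (Real.exp s))
      = Real.exp (k₀:ℝ) / Real.exp s := by
    rw [tsum_eq_single k₀]
    · rw [Set.indicator_of_mem ((hmem k₀).2 rfl), hlog]
    · intro k hk
      apply Set.indicator_of_notMem
      intro h
      exact hk ((hmem k).1 h)
  rw [htsum, hk₀c, ← Real.exp_sub]

lemma x_eval' {t : ℝ} (ht : Real.exp 1 ≤ t) :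
    x t = cK * Real.exp (-(Int.fract (Real.log (Real.log t)))) := by
  have ht0 : (0:ℝ) < t := lt_of_lt_of_le (Real.exp_pos 1) ht
  have hlt : 1 ≤ Real.log t := by
    calc (1:ℝ) = Real.log (Real.exp 1) := (Real.log_exp 1).symm
    _ ≤ Real.log t := Real.log_le_log (Real.exp_pos 1) ht
  have hlt0 : 0 < Real.log t := lt_of_lt_of_le one_pos hlt
  have hs : 0 ≤ Real.log (Real.log t) := Real.log_nonneg hlt
  have hrw : t = Real.exp (Real.exp (Real.log (Real.log t))) := by
    rw [Real.exp_log hlt0, Real.exp_log ht0]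
  calc x t = x (Real.exp (Real.exp (Real.log (Real.log t)))) := by rw [← hrw]
  _ = cK * Real.exp (↑⌊Real.log (Real.log t)⌋ - Real.log (Real.log t)) := x_eval hs
  _ = cK * Real.exp (-(Int.fract (Real.log (Real.log t)))) := by
      rw [Int.fract]; ring_nf

lemma x_nonneg (t : ℝ) : 0 ≤ x t := by
  rcases lt_or_ge t (Real.exp 1) with h | h
  · rw [x_zero h]
  · rw [x_eval' h]
    have := cK_pos
    positivity

lemma x_le (t : ℝ) : x t ≤ cK := by
  rcases lt_or_ge t (Real.exp 1) with h | h
  · rw [x_zero h]; exact le_of_lt cK_pos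
  · rw [x_eval' h]
    have h1 : Real.exp (-(Int.fract (Real.log (Real.log t)))) ≤ 1 := by
      rw [Real.exp_le_one_iff]
      have := Int.fract_nonneg (Real.log (Real.log t))
      linarith
    nlinarith [cK_pos, Real.exp_pos (-(Int.fract (Real.log (Real.log t))))]

lemma x_bdd : Bdd x := by
  refine ⟨cK, fun t => ?_⟩
  rw [abs_le]
  exact ⟨by linarith [x_nonneg t, cK_pos], x_le t⟩

lemma bdd_comp {f : ℝ → ℝ} (hf : Bdd f) (g : ℝ → ℝ) : Bdd (fun t => f (g t)) := by
  obtain ⟨C, hC⟩ := hf; exact ⟨C, fun t => hC (g t)⟩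

lemma bdd_add {f g : ℝ → ℝ} (hf : Bdd f) (hg : Bdd g) : Bdd (f + g) := by
  obtain ⟨C, hC⟩ := hf; obtain ⟨D, hD⟩ := hg
  exact ⟨C + D, fun t => le_trans (abs_add_le _ _) (add_le_add (hC t) (hD t))⟩

lemma bdd_const (c : ℝ) : Bdd (fun _ => c) := ⟨|c|, fun _ => le_refl _⟩

lemma bdd_neg {f : ℝ → ℝ} (hf : Bdd f) : Bdd (fun t => -(f t)) := by
  obtain ⟨C, hC⟩ := hf; exact ⟨C, fun t => by rw [abs_neg]; exact hC t⟩

lemma bdd_sub {f g : ℝ → ℝ} (hf : Bdd f) (hg : Bdd g) : Bdd (fun t => f t - g t) := by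
  have := bdd_add hf (bdd_neg hg)
  convert this using 1; funext t; simp [sub_eq_add_neg]

lemma omega_const (γ : GenLimit) (c : ℝ) : γ.ω (fun _ => c) = c :=
  γ.lim _ c (bdd_const c) tendsto_const_nhds

lemma omega_congr (γ : GenLimit) {f g : ℝ → ℝ} (hf : Bdd f) (hg : Bdd g)
    (h : ∀ᶠ t in atTop, f t = g t) : γ.ω f = γ.ω g := by
  have hd : Bdd (fun t => f t - g t) := bdd_sub hf hg
  have h0 : γ.ω (fun t => f t - g t) = 0 := by
    apply γ.lim _ _ hd
    apply Tendsto.congr' _ tendsto_const_nhds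
    filter_upwards [h] with t ht
    rw [ht, sub_self]
  have : γ.ω (g + fun t => f t - g t) = γ.ω g + γ.ω (fun t => f t - g t) :=
    γ.add _ _ hg hd
  have heq : (g + fun t => f t - g t) = f := by funext t; simp
  rw [heq] at this
  rw [this, h0, add_zero]

lemma omega_le (γ : GenLimit) {f : ℝ → ℝ} (hf : Bdd f) {C : ℝ} (h : ∀ t, f t ≤ C) :
    γ.ω f ≤ C := by
  have hd : Bdd (fun t => C - f t) := bdd_sub (bdd_const C) hf
  have h1 : 0 ≤ γ.ω (fun t => C - f t) := γ.pos _ hd (fun t => by linarith [h t])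
  have h2 : γ.ω (f + fun t => C - f t) = γ.ω f + γ.ω (fun t => C - f t) :=
    γ.add _ _ hf hd
  have heq : (f + fun t => C - f t) = (fun _ => C) := by funext t; simp
  rw [heq, omega_const] at h2
  linarith

lemma omega_ge (γ : GenLimit) {f : ℝ → ℝ} (hf : Bdd f) {C : ℝ} (h : ∀ t, C ≤ f t) :
    C ≤ γ.ω f := by
  have hd : Bdd (fun t => f t - C) := bdd_sub hf (bdd_const C)
  have h1 : 0 ≤ γ.ω (fun t => f t - C) := γ.pos _ hd (fun t => by linarith [h t])
  have h2 : γ.ω ((fun _ => C) + fun t => f t - C) = γ.ω (fun _ => C) + γ.ω (fun t => f t - C) :=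
    γ.add _ _ (bdd_const C) hd
  have heq : ((fun _ => C) + fun t => f t - C) = f := by funext t; simp
  rw [heq, omega_const] at h2
  linarith

lemma bdd_sum (F : ℕ → ℝ → ℝ) (hF : ∀ j, Bdd (F j)) (n : ℕ) :
    Bdd (fun t => ∑ j ∈ Finset.range n, F j t) := by
  induction n with
  | zero => simpa using bdd_const 0
  | succ n ih =>
    have := bdd_add ih (hF n)
    convert this using 1; funext t; simp [Finset.sum_range_succ]

lemma omega_sum (γ : GenLimit) (F : ℕ → ℝ → ℝ) (hF : ∀ j, Bdd (F j)) (n : ℕ) :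
    γ.ω (fun t => ∑ j ∈ Finset.range n, F j t) = ∑ j ∈ Finset.range n, γ.ω (F j) := by
  induction n with
  | zero => simpa using omega_const γ 0
  | succ n ih =>
    have h1 : γ.ω ((fun t => ∑ j ∈ Finset.range n, F j t) + F n)
        = γ.ω (fun t => ∑ j ∈ Finset.range n, F j t) + γ.ω (F n) :=
      γ.add _ _ (bdd_sum F hF n) (hF n)
    have heq : ((fun t => ∑ j ∈ Finset.range n, F j t) + F n)
        = (fun t => ∑ j ∈ Finset.range (n+1), F j t) := by
      funext t; simp [Finset.sum_range_succ]
    rw [heq] at h1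
    rw [h1, ih, Finset.sum_range_succ]

noncomputable def phi (n : ℕ) (s : ℝ) : ℝ :=
  ∑ j ∈ Finset.range n, Real.exp (-(Int.fract (s + (j:ℝ)/n)))

noncomputable def T (n : ℕ) : ℝ := ∑ j ∈ Finset.range n, Real.exp (-((j:ℝ)/n))

lemma T_nonneg (n : ℕ) : 0 ≤ T n := by
  unfold T; positivity

lemma phi_per (n : ℕ) (hn : 0 < n) (s : ℝ) : phi n (s + 1/n) = phi n s := by
  unfold phi
  set f : ℕ → ℝ := fun j => Real.exp (-(Int.fract (s + (j:ℝ)/n))) with hf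
  have hfn : f n = f 0 := by
    rw [hf]
    simp only
    have h1 : s + (n:ℝ)/n = (s + (0:ℕ)/n) + 1 := by
      rw [div_self (by exact_mod_cast hn.ne' : (n:ℝ) ≠ 0)]
      push_cast; ring
    rw [h1, Int.fract_add_one]
  have hstep : ∀ j : ℕ, Real.exp (-(Int.fract (s + 1/n + (j:ℝ)/n))) = f (j + 1) := by
    intro j
    rw [hf]
    simp only
    congr 2
    push_cast
    ring
  calc ∑ j ∈ Finset.range n, Real.exp (-(Int.fract (s + 1/n + (j:ℝ)/n)))
      = ∑ j ∈ Finset.range n, f (j + 1) := by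
        apply Finset.sum_congr rfl; intro j _; exact hstep j
    _ = ∑ j ∈ Finset.range (n+1), f j - f 0 := by
        rw [Finset.sum_range_succ']; ring
    _ = ∑ j ∈ Finset.range n, f j + f n - f 0 := by rw [Finset.sum_range_succ]
    _ = ∑ j ∈ Finset.range n, f j := by rw [hfn]; ring

lemma phi_per_m (n : ℕ) (hn : 0 < n) (s : ℝ) (m : ℕ) : phi n (s + (m:ℝ)/n) = phi n s := by
  induction m with
  | zero => simp
  | succ m ih =>
    have h1 : s + ((m:ℝ)+1)/n = (s + (m:ℝ)/n) + 1/n := by ring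
    push_cast
    rw [h1, phi_per n hn, ih]

lemma phi_eval (n : ℕ) (hn : 0 < n) {ε : ℝ} (h0 : 0 ≤ ε) (h1 : ε < 1/n) :
    phi n ε = Real.exp (-ε) * T n := by
  unfold phi T
  rw [Finset.mul_sum]
  apply Finset.sum_congr rfl
  intro j hj
  have hjn : (j:ℝ) + 1 ≤ n := by
    exact_mod_cast Finset.mem_range.1 hj
  have hn' : (0:ℝ) < n := by exact_mod_cast hn
  have hfr : Int.fract (ε + (j:ℝ)/n) = ε + (j:ℝ)/n := by
    apply Int.fract_eq_self.mpr
    constructor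
    · positivity
    · have : ε + (j:ℝ)/n < 1/n + (j:ℝ)/n := by linarith
      have h2 : (1:ℝ)/n + (j:ℝ)/n ≤ 1 := by
        rw [← add_div, div_le_one hn']
        linarith
      linarith
  rw [hfr, ← Real.exp_add]
  congr 1
  ring

lemma phi_bounds (n : ℕ) (hn : 0 < n) {s : ℝ} (hs : 0 ≤ s) :
    Real.exp (-(1/(n:ℝ))) * T n ≤ phi n s ∧ phi n s ≤ T n := by
  have hn' : (0:ℝ) < n := by exact_mod_cast hn
  set m : ℕ := (⌊(n:ℝ) * s⌋).toNat with hm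
  set ε : ℝ := Int.fract ((n:ℝ) * s) / n with he
  have hfl : (0:ℤ) ≤ ⌊(n:ℝ) * s⌋ := Int.floor_nonneg.2 (by positivity)
  have hmc : (m:ℝ) = (⌊(n:ℝ) * s⌋ : ℝ) := by
    rw [hm]; exact_mod_cast congrArg Int.cast (Int.toNat_of_nonneg hfl)
  have hε0 : 0 ≤ ε := by
    rw [he]; exact div_nonneg (Int.fract_nonneg _) hn'.le
  have hε1 : ε < 1/n := by
    rw [he, div_lt_div_iff₀ hn' hn']
    have := Int.fract_lt_one ((n:ℝ) * s)
    nlinarith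
  have hsdec : s = ε + (m:ℝ)/n := by
    rw [he, hmc, Int.fract]
    field_simp
    ring
  have heval : phi n s = Real.exp (-ε) * T n := by
    rw [hsdec, phi_per_m n hn, phi_eval n hn hε0 hε1]
  have hT := T_nonneg n
  constructor
  · rw [heval]
    apply mul_le_mul_of_nonneg_right _ hT
    apply Real.exp_le_exp.2
    linarith
  · rw [heval]
    have : Real.exp (-ε) ≤ 1 := by
      rw [Real.exp_le_one_iff]; linarith
    nlinarith

lemma S_eval (n : ℕ) (hn : 0 < n) {t : ℝ} (ht : Real.exp 1 ≤ t) (j : ℕ) :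
    x (t ^ Real.exp ((j:ℝ)/n)) =
      cK * Real.exp (-(Int.fract (Real.log (Real.log t) + (j:ℝ)/n))) := by
  have ht0 : (0:ℝ) < t := lt_of_lt_of_le (Real.exp_pos 1) ht
  have hlt : 1 ≤ Real.log t := by
    calc (1:ℝ) = Real.log (Real.exp 1) := (Real.log_exp 1).symm
    _ ≤ Real.log t := Real.log_le_log (Real.exp_pos 1) ht
  have hlt0 : 0 < Real.log t := lt_of_lt_of_le one_pos hlt
  have hs0 : 0 ≤ Real.log (Real.log t) := Real.log_nonneg hlt
  set s : ℝ := Real.log (Real.log t) with hs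
  have hσ0 : 0 ≤ s + (j:ℝ)/n := by positivity
  have hrpow : t ^ Real.exp ((j:ℝ)/n) = Real.exp (Real.exp (s + (j:ℝ)/n)) := by
    rw [Real.rpow_def_of_pos ht0, Real.exp_add]
    congr 1
    rw [hs, Real.exp_log hlt0]
  rw [hrpow, x_eval hσ0, Int.fract]
  ring_nf

lemma key (γ : GenLimit) (hexp : γ.ExpInvariant) (n : ℕ) (hn : 0 < n) :
    Real.exp (-(1/(n:ℝ))) ≤ γ.ω x ∧ γ.ω x ≤ Real.exp (1/(n:ℝ)) := by
  have hn' : (0:ℝ) < n := by exact_mod_cast hn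
  set F : ℕ → ℝ → ℝ := fun j t => x (t ^ Real.exp ((j:ℝ)/n)) with hF
  have hFbdd : ∀ j, Bdd (F j) := fun j => bdd_comp x_bdd _
  have hFω : ∀ j, γ.ω (F j) = γ.ω x := fun j => hexp x x_bdd _ (Real.exp_pos _)
  set S : ℝ → ℝ := fun t => ∑ j ∈ Finset.range n, F j t with hS
  have hSbdd : Bdd S := bdd_sum F hFbdd n
  have hωS : γ.ω S = n * γ.ω x := by
    rw [hS, omega_sum γ F hFbdd n]
    rw [Finset.sum_congr rfl (fun j _ => hFω j), Finset.sum_const, Finset.card_range]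
    simp [nsmul_eq_mul]
  set h : ℝ → ℝ := fun t => if Real.exp 1 ≤ t then S t else cK * T n with hh
  have hhbdd : Bdd h := by
    obtain ⟨C, hC⟩ := hSbdd
    refine ⟨max C |cK * T n|, fun t => ?_⟩
    rw [hh]
    by_cases hc : Real.exp 1 ≤ t
    · simp only [if_pos hc]
      exact le_trans (hC t) (le_max_left _ _)
    · simp only [if_neg hc]
      exact le_max_right _ _
  have hωh : γ.ω h = γ.ω S := by
    apply omega_congr γ hhbdd hSbdd
    filter_upwards [eventually_ge_atTop (Real.exp 1)] with t ht
    rw [hh]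
    simp only [if_pos ht]
  have hhub : ∀ t, h t ≤ cK * T n := by
    intro t
    rw [hh]
    by_cases hc : Real.exp 1 ≤ t
    · simp only [if_pos hc]
      have hs0 : 0 ≤ Real.log (Real.log t) := by
        apply Real.log_nonneg
        calc (1:ℝ) = Real.log (Real.exp 1) := (Real.log_exp 1).symm
        _ ≤ Real.log t := Real.log_le_log (Real.exp_pos 1) hc
      have hSE : S t = cK * phi n (Real.log (Real.log t)) := by
        rw [hS, hF]
        simp only
        rw [phi, Finset.mul_sum]
        exact Finset.sum_congr rfl (fun j _ => S_eval n hn hc j)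
      rw [hSE]
      exact mul_le_mul_of_nonneg_left (phi_bounds n hn hs0).2 cK_pos.le
    · simp only [if_neg hc]
      exact le_refl _
  have hhlb : ∀ t, Real.exp (-(1/(n:ℝ))) * (cK * T n) ≤ h t := by
    intro t
    rw [hh]
    by_cases hc : Real.exp 1 ≤ t
    · simp only [if_pos hc]
      have hs0 : 0 ≤ Real.log (Real.log t) := by
        apply Real.log_nonneg
        calc (1:ℝ) = Real.log (Real.exp 1) := (Real.log_exp 1).symm
        _ ≤ Real.log t := Real.log_le_log (Real.exp_pos 1) hc
      have hSE : S t = cK * phi n (Real.log (Real.log t)) := by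
        rw [hS, hF]
        simp only
        rw [phi, Finset.mul_sum]
        exact Finset.sum_congr rfl (fun j _ => S_eval n hn hc j)
      rw [hSE]
      calc Real.exp (-(1/(n:ℝ))) * (cK * T n)
          = cK * (Real.exp (-(1/(n:ℝ))) * T n) := by ring
        _ ≤ cK * phi n (Real.log (Real.log t)) :=
            mul_le_mul_of_nonneg_left (phi_bounds n hn hs0).1 cK_pos.le
    · simp only [if_neg hc]
      have h1 : Real.exp (-(1/(n:ℝ))) ≤ 1 := by
        rw [Real.exp_le_one_iff]
        have : (0:ℝ) ≤ 1/(n:ℝ) := by positivity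
        linarith
      nlinarith [mul_nonneg cK_pos.le (T_nonneg n)]
  -- ω bounds
  have hub : n * γ.ω x ≤ cK * T n := by
    rw [← hωS, ← hωh]; exact omega_le γ hhbdd hhub
  have hlb : Real.exp (-(1/(n:ℝ))) * (cK * T n) ≤ n * γ.ω x := by
    rw [← hωS, ← hωh]; exact omega_ge γ hhbdd hhlb
  -- compute cK * T n
  set r : ℝ := Real.exp (-(1/(n:ℝ))) with hr
  have hr0 : 0 < r := Real.exp_pos _
  have hr1 : r < 1 := by
    rw [hr, Real.exp_lt_one_iff]
    have : (0:ℝ) < 1/n := by positivity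
    linarith
  have hT : T n = (1 - Real.exp (-1)) / (1 - r) := by
    have hgeom : ∀ j : ℕ, Real.exp (-((j:ℝ)/n)) = r ^ j := by
      intro j
      rw [hr, ← Real.exp_nat_mul]
      congr 1
      ring
    rw [T, Finset.sum_congr rfl (fun j _ => hgeom j), geom_sum_eq hr1.ne]
    have hrn : r ^ n = Real.exp (-1) := by
      rw [hr, ← Real.exp_nat_mul]
      congr 1
      field_simp
    rw [hrn]
    rw [div_eq_div_iff (by linarith) (by linarith)]
    ring
  have hcT : cK * T n = 1 / (1 - r) := by
    rw [hT]
    have he1 : (1:ℝ) < Real.exp 1 := by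
      have := Real.exp_one_gt_d9; linarith
    have hc1 : cK * (1 - Real.exp (-1)) = 1 := by
      rw [cK, Real.exp_neg]
      have h0 : Real.exp 1 ≠ 0 := (Real.exp_pos 1).ne'
      have h1 : Real.exp 1 - 1 ≠ 0 := by linarith
      field_simp
    calc cK * ((1 - Real.exp (-1)) / (1 - r)) = cK * (1 - Real.exp (-1)) / (1 - r) := by ring
    _ = 1 / (1 - r) := by rw [hc1]
  rw [hcT] at hub hlb
  -- elementary exponential inequalities
  set d : ℝ := 1 - r with hd
  have hd0 : 0 < d := by rw [hd]; linarith
  have hnd1 : (n:ℝ) * d ≤ 1 := by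
    have := Real.add_one_le_exp (-(1/(n:ℝ)))
    rw [← hr] at this
    have h2 : d ≤ 1/n := by rw [hd]; linarith
    calc (n:ℝ) * d ≤ (n:ℝ) * (1/n) := mul_le_mul_of_nonneg_left h2 hn'.le
    _ = 1 := by field_simp
  have hnd2 : r ≤ (n:ℝ) * d := by
    have h1 := Real.add_one_le_exp (1/(n:ℝ))
    have h2 : Real.exp (1/(n:ℝ)) * r = 1 := by
      rw [hr, ← Real.exp_add]
      simp
    have h3 : (1/(n:ℝ) + 1) * r ≤ 1 := by
      nlinarith [Real.exp_pos (1/(n:ℝ))]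
    have h4 : (1/(n:ℝ)) * r ≤ d := by rw [hd]; nlinarith
    calc r = (n:ℝ) * ((1/(n:ℝ)) * r) := by field_simp
    _ ≤ (n:ℝ) * d := mul_le_mul_of_nonneg_left h4 hn'.le
  have hA0 : 0 < γ.ω x := by
    have h5 : 0 < r * (1/(1-r)) := by
      apply mul_pos hr0
      rw [← hd]; positivity
    have h6 : 0 < r * (1/d) := by positivity
    have h7 : 0 < (n:ℝ) * γ.ω x := lt_of_lt_of_le h6 hlb
    by_contra hA
    push_neg at hA
    nlinarith
  have hlb' : r / d ≤ (n:ℝ) * γ.ω x := by rwa [mul_one_div] at hlb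
  have e1 : r ≤ (n:ℝ) * γ.ω x * d := (div_le_iff₀ hd0).1 hlb'
  constructor
  · -- r ≤ A
    nlinarith [mul_le_mul_of_nonneg_left hnd1 hA0.le]
  · -- A ≤ exp (1/n)
    have h2 : Real.exp (1/(n:ℝ)) * r = 1 := by
      rw [hr, ← Real.exp_add]; simp
    have e2 : (n:ℝ) * γ.ω x * d ≤ 1 := by
      have := mul_le_mul_of_nonneg_right hub hd0.le
      calc (n:ℝ) * γ.ω x * d ≤ 1/d * d := this
      _ = 1 := by field_simp
    have e3 : γ.ω x * r ≤ 1 := by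
      nlinarith [mul_le_mul_of_nonneg_left hnd2 hA0.le]
    exact le_of_mul_le_mul_right (by linarith : γ.ω x * r ≤ Real.exp (1/(n:ℝ)) * r) hr0

theorem expInvariant_omega_x_eq_one (γ : GenLimit) (hexp : γ.ExpInvariant) :
    γ.ω x = 1 := by
  have hlim0 : Tendsto (fun n : ℕ => 1/(n:ℝ)) atTop (nhds 0) :=
    tendsto_one_div_atTop_nhds_zero_nat
  have hub : Tendsto (fun n : ℕ => Real.exp (1/(n:ℝ))) atTop (nhds 1) := by
    have := (Real.continuous_exp.tendsto 0).comp hlim0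
    simpa [Function.comp_def] using this
  have hlb : Tendsto (fun n : ℕ => Real.exp (-(1/(n:ℝ)))) atTop (nhds 1) := by
    have h0 : Tendsto (fun n : ℕ => -(1/(n:ℝ))) atTop (nhds 0) := by
      simpa using hlim0.neg
    have := (Real.continuous_exp.tendsto 0).comp h0
    simpa [Function.comp_def] using this
  have h1 : γ.ω x ≤ 1 := by
    apply ge_of_tendsto hub
    filter_upwards [eventually_gt_atTop 0] with n hn
    exact (key γ hexp n hn).2
  have h2 : 1 ≤ γ.ω x := by
    apply le_of_tendsto hlb
    filter_upwards [eventually_gt_atTop 0] with n hn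
    exact (key γ hexp n hn).1
  linarith
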